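/- Let D be an effective divisor on a nonsingular variety X. The set of jumping numbers of (X,D), i.e. the set of α ∈ ℚ_{>0} where J(αD) changes, is a discrete set of rational numbers; more precisely, with a fixed log resolution μ*D = Σ m_i E_i and discrepancies k_i, every jumping number belongs to the set {(k_i + n)/m_i : i with m_i > 0, n ∈ ℤ_{≥1}}. -/
import Mathlib


/- Discreteness/rationality of jumping numbers (Section 2).  Fix a log resolution with
μ*D = Σ m_i E_i and discrepancies k_i ≥ 0, so that J(αD) = Γ(⌊α·m⌋) where the
pushforward Γ(v) = μ_*O_Y(K_{Y/X} − v·E) only depends on the truncated coefficients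
max(v i − k i, 0).  If α > 0 is a jumping number, i.e. Γ(⌊(α−ε)m⌋) ≠ Γ(⌊αm⌋) for all
ε > 0, then α = (k i + n)/m i for some i with m i > 0 and some integer n ≥ 1. -/
theorem stmt_16 (ι : Type) [Fintype ι] (R : Type) [CommRing R]
    (m : ι → ℕ) (k : ι → ℤ) (hk : ∀ i, 0 ≤ k i)
    (Γ : (ι → ℤ) → Ideal R)
    (hΓ : ∀ v w : ι → ℤ, (∀ i, max (v i - k i) 0 = max (w i - k i) 0) → Γ v = Γ w)
    (α : ℚ) (hα : 0 < α)
    (hjump : ∀ ε : ℚ, 0 < ε →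
      Γ (fun i => ⌊(α - ε) * (m i : ℚ)⌋) ≠ Γ (fun i => ⌊α * (m i : ℚ)⌋)) :
    ∃ i : ι, 0 < m i ∧ ∃ n : ℤ, 1 ≤ n ∧ α = ((k i : ℚ) + (n : ℚ)) / (m i : ℚ) := by
  by_contra hc
  push_neg at hc
  classical
  set f : ι → ℚ := fun i =>
    if h : 0 < m i ∧ k i < ⌊α * (m i : ℚ)⌋ then
      (α * (m i : ℚ) - (⌊α * (m i : ℚ)⌋ : ℚ)) / (m i : ℚ)
    else 1 with hf
  have hfpos : ∀ i, 0 < f i := by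
    intro i
    rw [hf]
    dsimp only
    split_ifs with h
    · obtain ⟨hm, hkf⟩ := h
      have hmq : (0 : ℚ) < (m i : ℚ) := by exact_mod_cast hm
      have hn1 : (1 : ℤ) ≤ ⌊α * (m i : ℚ)⌋ - k i := by omega
      have hne := hc i hm (⌊α * (m i : ℚ)⌋ - k i) hn1
      have hne' : α * (m i : ℚ) ≠ (⌊α * (m i : ℚ)⌋ : ℚ) := by
        intro heq
        apply hne
        push_cast
        rw [eq_div_iff (ne_of_gt hmq)]
        linarith
      have hle : (⌊α * (m i : ℚ)⌋ : ℚ) ≤ α * (m i : ℚ) := Int.floor_le _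
      have : (⌊α * (m i : ℚ)⌋ : ℚ) < α * (m i : ℚ) := lt_of_le_of_ne hle (Ne.symm hne')
      exact div_pos (by linarith) hmq
    · exact one_pos
  rcases isEmpty_or_nonempty ι with hι | hι
  · exact hjump 1 one_pos (hΓ _ _ (fun i => isEmptyElim i))
  · set ε := Finset.univ.inf' Finset.univ_nonempty f with hε_def
    have hε : 0 < ε := by
      rw [hε_def, Finset.lt_inf'_iff]
      exact fun i _ => hfpos i
    refine hjump ε hε (hΓ _ _ ?_)
    intro i
    by_cases hm : 0 < m i
    · have hmq : (0 : ℚ) < (m i : ℚ) := by exact_mod_cast hm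
      by_cases hkf : k i < ⌊α * (m i : ℚ)⌋
      · have hle : ε ≤ f i := Finset.inf'_le _ (Finset.mem_univ i)
        have hfi : f i = (α * (m i : ℚ) - (⌊α * (m i : ℚ)⌋ : ℚ)) / (m i : ℚ) := by
          rw [hf]; simp [hm, hkf]
        rw [hfi] at hle
        have hle' : ε * (m i : ℚ) ≤ α * (m i : ℚ) - (⌊α * (m i : ℚ)⌋ : ℚ) :=
          (le_div_iff₀ hmq).mp hle
        have h1 : (⌊α * (m i : ℚ)⌋ : ℚ) ≤ (α - ε) * (m i : ℚ) := by nlinarith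
        have h2 : ⌊(α - ε) * (m i : ℚ)⌋ = ⌊α * (m i : ℚ)⌋ :=
          le_antisymm (Int.floor_le_floor (by nlinarith)) (Int.le_floor.mpr h1)
        rw [h2]
      · push_neg at hkf
        have hA : ⌊(α - ε) * (m i : ℚ)⌋ ≤ k i :=
          le_trans (Int.floor_le_floor (by nlinarith)) hkf
        rw [max_eq_right (by omega : ⌊(α - ε) * (m i : ℚ)⌋ - k i ≤ 0),
            max_eq_right (by omega : ⌊α * (m i : ℚ)⌋ - k i ≤ 0)]
    · have hm0 : m i = 0 := Nat.eq_zero_of_not_pos hm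
      simp [hm0]
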